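/- Fix L ≥ 1, σ > 0, segments y_0, …, y_{N_d−1} ∈ ℝ^L, nonnegative weights w_m[l] for 0 ≤ l ≤ 2L−1 and v_m[l₁, l₂] for L+1 ≤ l₁ ≤ 2L−1, 1 ≤ l₂ ≤ l₁−L. Define F(x) = Σ_m ( Σ_{l=0}^{2L−1} w_m[l] g_l^{(m)}(x) + Σ_{l₁=L+1}^{2L−1} Σ_{l₂=1}^{l₁−L} v_m[l₁, l₂] h_{l₁,l₂}^{(m)}(x) ), where g_l^{(m)}(x) = −(1/(2σ²)) Σ_{i=0}^{L−1} ( y_m[i] − (Zx)[(i+l) mod 2L] )² and h_{l₁,l₂}^{(m)}(x) = −(1/(2σ²)) Σ_{i=0}^{L−1} ( y_m[i] − (Zx)[(i+l₁) mod 2L] − (Zx)[(i+l₂) mod 2L] )². If for every 0 ≤ j ≤ L−1 the denominator D_j = Σ_m ( Σ_{l=j+1}^{j+L} w_m[l] + Σ_{l₁=L+1}^{j+L} Σ_{l₂=1}^{l₁−L} v_m[l₁, l₂] + Σ_{l₁=L+j+1}^{2L−1} Σ_{l₂=j+1}^{l₁−L} v_m[l₁, l₂] ) is strictly positive, then F is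 a concave quadratic function of x with a unique global maximizer x* given coordinatewise by x*[j] = [ Σ_m ( Σ_{l=j+1}^{j+L} w_m[l] y_m[j+L−l] + Σ_{l₁=L+1}^{j+L} Σ_{l₂=1}^{l₁−L} v_m[l₁, l₂] y_m[j+L−l₁] + Σ_{l₁=L+j+1}^{2L−1} Σ_{l₂=j+1}^{l₁−L} v_m[l₁, l₂] y_m[j+L−l₂] ) ] / D_j. -/

import Mathlib

/-- Left zero-padding `Z : ℝ^L → ℝ^{2L}`: `(Zx)[i] = 0` for `0 ≤ i ≤ L−1` and
`(Zx)[i] = x[i−L]` for `L ≤ i ≤ 2L−1` (represented on `ℕ`, zero elsewhere). -/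
noncomputable def Zpad (L : ℕ) (x : Fin L → ℝ) : ℕ → ℝ :=
  fun i => if h : L ≤ i ∧ i < 2 * L then x ⟨i - L, by omega⟩ else 0

/-- Single-occurrence log-likelihood term
`g_l^{(m)}(x) = −(1/(2σ²)) Σ_{i=0}^{L−1} ( y_m[i] − (Zx)[(i+l) mod 2L] )²`. -/
noncomputable def loglik1 (L : ℕ) (σ : ℝ) (ym : ℕ → ℝ) (l : ℕ) (x : Fin L → ℝ) : ℝ :=
  -(1 / (2 * σ ^ 2)) * ∑ i ∈ Finset.range L, (ym i - Zpad L x ((i + l) % (2 * L))) ^ 2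

/-- Double-occurrence log-likelihood term `h_{l₁,l₂}^{(m)}(x) =
−(1/(2σ²)) Σ_{i=0}^{L−1} ( y_m[i] − (Zx)[(i+l₁) mod 2L] − (Zx)[(i+l₂) mod 2L] )²`. -/
noncomputable def loglik2 (L : ℕ) (σ : ℝ) (ym : ℕ → ℝ) (l₁ l₂ : ℕ) (x : Fin L → ℝ) : ℝ :=
  -(1 / (2 * σ ^ 2)) * ∑ i ∈ Finset.range L,
    (ym i - Zpad L x ((i + l₁) % (2 * L)) - Zpad L x ((i + l₂) % (2 * L))) ^ 2

/-- The M-step objective of the approximate EM algorithm (arbitrary spacing distribution):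
`F(x) = Σ_m ( Σ_{l<2L} w_m[l] g_l^{(m)}(x)
+ Σ_{l₁=L+1}^{2L−1} Σ_{l₂=1}^{l₁−L} v_m[l₁,l₂] h_{l₁,l₂}^{(m)}(x) )`. -/
noncomputable def emObjective (L : ℕ) (σ : ℝ) (Nd : ℕ) (y : ℕ → ℕ → ℝ)
    (w : ℕ → ℕ → ℝ) (v : ℕ → ℕ → ℕ → ℝ) (x : Fin L → ℝ) : ℝ :=
  ∑ m ∈ Finset.range Nd,
    ((∑ l ∈ Finset.range (2 * L), w m l * loglik1 L σ (y m) l x)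
      + ∑ l₁ ∈ Finset.Icc (L + 1) (2 * L - 1), ∑ l₂ ∈ Finset.Icc 1 (l₁ - L),
          v m l₁ l₂ * loglik2 L σ (y m) l₁ l₂ x)

/-- The denominator `D_j = Σ_m ( Σ_{l=j+1}^{j+L} w_m[l]
+ Σ_{l₁=L+1}^{j+L} Σ_{l₂=1}^{l₁−L} v_m[l₁,l₂]
+ Σ_{l₁=L+j+1}^{2L−1} Σ_{l₂=j+1}^{l₁−L} v_m[l₁,l₂] )`. -/
noncomputable def emDenom (L : ℕ) (Nd : ℕ) (w : ℕ → ℕ → ℝ) (v : ℕ → ℕ → ℕ → ℝ)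
    (j : ℕ) : ℝ :=
  ∑ m ∈ Finset.range Nd,
    ((∑ l ∈ Finset.Icc (j + 1) (j + L), w m l)
      + (∑ l₁ ∈ Finset.Icc (L + 1) (j + L), ∑ l₂ ∈ Finset.Icc 1 (l₁ - L), v m l₁ l₂)
      + ∑ l₁ ∈ Finset.Icc (L + j + 1) (2 * L - 1), ∑ l₂ ∈ Finset.Icc (j + 1) (l₁ - L),
          v m l₁ l₂)

/-- The numerator `Σ_m ( Σ_{l=j+1}^{j+L} w_m[l] y_m[j+L−l]
+ Σ_{l₁=L+1}^{j+L} Σ_{l₂=1}^{l₁−L} v_m[l₁,l₂] y_m[j+L−l₁]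
+ Σ_{l₁=L+j+1}^{2L−1} Σ_{l₂=j+1}^{l₁−L} v_m[l₁,l₂] y_m[j+L−l₂] )`. -/
noncomputable def emNumer (L : ℕ) (Nd : ℕ) (y : ℕ → ℕ → ℝ) (w : ℕ → ℕ → ℝ)
    (v : ℕ → ℕ → ℕ → ℝ) (j : ℕ) : ℝ :=
  ∑ m ∈ Finset.range Nd,
    ((∑ l ∈ Finset.Icc (j + 1) (j + L), w m l * y m (j + L - l))
      + (∑ l₁ ∈ Finset.Icc (L + 1) (j + L), ∑ l₂ ∈ Finset.Icc 1 (l₁ - L),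
          v m l₁ l₂ * y m (j + L - l₁))
      + ∑ l₁ ∈ Finset.Icc (L + j + 1) (2 * L - 1), ∑ l₂ ∈ Finset.Icc (j + 1) (l₁ - L),
          v m l₁ l₂ * y m (j + L - l₂))

open Finset in
private lemma collect2 (s : Finset ℕ) (P Q : ℕ → ℝ) (X : ℝ) :
    ∑ l ∈ s, (2 * P l * X - Q l * X^2)
      = 2 * (∑ l ∈ s, P l) * X - (∑ l ∈ s, Q l) * X^2 := by
  rw [Finset.sum_sub_distrib]
  congr 1
  · rw [Finset.mul_sum, Finset.sum_mul]
  · rw [Finset.sum_mul]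

/-- Evaluation of `x` at a natural index, zero out of range. -/
noncomputable def coord (L : ℕ) (x : Fin L → ℝ) (t : ℕ) : ℝ :=
  if h : t < L then x ⟨t, h⟩ else 0

open Finset in
private lemma Zpad_mod (L : ℕ) (x : Fin L → ℝ) (i l : ℕ) (hi : i < L) (hl : l < 2*L) :
    Zpad L x ((i + l) % (2*L)) =
      if L ≤ i + l ∧ i + l < 2*L then coord L x (i + l - L) else 0 := by
  rcases lt_or_ge (i+l) (2*L) with h2 | h2
  · rw [Nat.mod_eq_of_lt h2]
    simp only [Zpad, coord]
    split_ifs <;> first | rfl | omega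
  · have h3 : (i+l) % (2*L) = i + l - 2*L := by
      rw [Nat.mod_eq_sub_mod h2, Nat.mod_eq_of_lt (by omega)]
    rw [h3]
    simp only [Zpad]
    rw [dif_neg (by omega), if_neg (by omega)]

open Finset in
private lemma sumA (L : ℕ) (f : ℕ → ℕ → ℝ) :
    ∑ l ∈ range (2*L), ∑ i ∈ range L, (if L ≤ i + l ∧ i + l < 2*L then f l i else 0)
    = ∑ j ∈ range L, ∑ l ∈ Icc (j+1) (j+L), f l (j + L - l) := by
  rw [← Finset.sum_product', ← Finset.sum_filter]
  rw [Finset.sum_sigma']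
  apply Finset.sum_nbij' (i := fun p => (⟨p.2 + p.1 - L, p.1⟩ : Σ _ : ℕ, ℕ))
    (j := fun q => ((q.2, q.1 + L - q.2) : ℕ × ℕ))
  · intro p hp
    simp only [Finset.mem_filter, Finset.mem_product, Finset.mem_range] at hp
    simp only [Finset.mem_sigma, Finset.mem_range, Finset.mem_Icc]
    omega
  · intro q hq
    simp only [Finset.mem_sigma, Finset.mem_range, Finset.mem_Icc] at hq
    simp only [Finset.mem_filter, Finset.mem_product, Finset.mem_range]
    omega
  · intro p hp
    simp only [Finset.mem_filter, Finset.mem_product, Finset.mem_range] at hp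
    simp only
    congr 1 <;> omega
  · intro q hq
    simp only [Finset.mem_sigma, Finset.mem_range, Finset.mem_Icc] at hq
    simp only
    congr 1 <;> omega
  · intro p hp
    simp only [Finset.mem_filter, Finset.mem_product, Finset.mem_range] at hp
    simp only
    congr 1
    omega

open Finset in
private lemma sumB' (L : ℕ) (f : ℕ → ℕ → ℝ) :
    ∑ l₁ ∈ Icc (L+1) (2*L-1), ∑ i ∈ range L,
        (if L ≤ i + l₁ ∧ i + l₁ < 2*L then f l₁ i else 0)
    = ∑ j ∈ range L, ∑ l₁ ∈ Icc (L+1) (j+L), f l₁ (j + L - l₁) := by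
  rw [← Finset.sum_product', ← Finset.sum_filter]
  rw [Finset.sum_sigma']
  apply Finset.sum_nbij' (i := fun p => (⟨p.2 + p.1 - L, p.1⟩ : Σ _ : ℕ, ℕ))
    (j := fun q => ((q.2, q.1 + L - q.2) : ℕ × ℕ))
  · intro p hp
    simp only [Finset.mem_filter, Finset.mem_product, Finset.mem_range, Finset.mem_Icc] at hp
    simp only [Finset.mem_sigma, Finset.mem_range, Finset.mem_Icc]
    omega
  · intro q hq
    simp only [Finset.mem_sigma, Finset.mem_range, Finset.mem_Icc] at hq
    simp only [Finset.mem_filter, Finset.mem_product, Finset.mem_range, Finset.mem_Icc]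
    omega
  · intro p hp
    simp only [Finset.mem_filter, Finset.mem_product, Finset.mem_range, Finset.mem_Icc] at hp
    simp only
    congr 1 <;> omega
  · intro q hq
    simp only [Finset.mem_sigma, Finset.mem_range, Finset.mem_Icc] at hq
    simp only
    congr 1 <;> omega
  · intro p hp
    simp only [Finset.mem_filter, Finset.mem_product, Finset.mem_range, Finset.mem_Icc] at hp
    simp only
    congr 1
    omega

open Finset in
private lemma sumC (L : ℕ) (f : ℕ → ℕ → ℕ → ℝ) :
    ∑ l₁ ∈ Icc (L+1) (2*L-1), ∑ l₂ ∈ Icc 1 (l₁-L), ∑ i ∈ range L,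
        (if L ≤ i + l₂ ∧ i + l₂ < 2*L then f l₁ l₂ i else 0)
    = ∑ j ∈ range L, ∑ l₁ ∈ Icc (L+j+1) (2*L-1), ∑ l₂ ∈ Icc (j+1) (l₁-L),
        f l₁ l₂ (j + L - l₂) := by
  simp only [← Finset.sum_product']
  rw [Finset.sum_sigma', ← Finset.sum_filter]
  simp only [Finset.sum_sigma']
  apply Finset.sum_nbij'
    (i := fun p => (⟨p.2.2 + p.2.1 - L, ⟨p.1, p.2.1⟩⟩ : Σ _ : ℕ, Σ _ : ℕ, ℕ))
    (j := fun q => (⟨q.2.1, (q.2.2, q.1 + L - q.2.2)⟩ : Σ _ : ℕ, ℕ × ℕ))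
  · rintro ⟨l₁, l₂, i⟩ hp
    simp only [Finset.mem_filter, Finset.mem_sigma, Finset.mem_product, Finset.mem_range,
      Finset.mem_Icc] at hp ⊢
    omega
  · rintro ⟨j, l₁, l₂⟩ hq
    simp only [Finset.mem_filter, Finset.mem_sigma, Finset.mem_product, Finset.mem_range,
      Finset.mem_Icc] at hq ⊢
    omega
  · rintro ⟨l₁, l₂, i⟩ hp
    simp only [Finset.mem_filter, Finset.mem_sigma, Finset.mem_product, Finset.mem_range,
      Finset.mem_Icc] at hp
    simp only
    congr 2
    omega
  · rintro ⟨j, l₁, l₂⟩ hq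
    simp only [Finset.mem_sigma, Finset.mem_range, Finset.mem_Icc] at hq
    simp only
    congr 1
    omega
  · rintro ⟨l₁, l₂, i⟩ hp
    simp only [Finset.mem_filter, Finset.mem_sigma, Finset.mem_product, Finset.mem_range,
      Finset.mem_Icc] at hp
    simp only
    congr 2
    omega

open Finset in
private lemma loglik1_expand (L : ℕ) (σ : ℝ) (ym : ℕ → ℝ) (l : ℕ) (x : Fin L → ℝ)
    (hl : l < 2*L) :
    loglik1 L σ ym l x
      = -(1/(2*σ^2)) * ∑ i ∈ range L, (ym i)^2
        + (1/(2*σ^2)) * ∑ i ∈ range L,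
            (if L ≤ i + l ∧ i + l < 2*L then
              2 * ym i * coord L x (i + l - L) - coord L x (i + l - L)^2 else 0) := by
  unfold loglik1
  have h : ∀ i ∈ range L, (ym i - Zpad L x ((i+l) % (2*L)))^2
      = (ym i)^2 - (if L ≤ i + l ∧ i + l < 2*L then
          2 * ym i * coord L x (i + l - L) - coord L x (i + l - L)^2 else 0) := by
    intro i hi
    rw [Zpad_mod L x i l (mem_range.mp hi) hl]
    split_ifs
    · ring
    · ring
  rw [Finset.sum_congr rfl h, Finset.sum_sub_distrib]
  ring

open Finset in
private lemma loglik2_expand (L : ℕ) (σ : ℝ) (ym : ℕ → ℝ) (l₁ l₂ : ℕ) (x : Fin L → ℝ)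
    (hL : 1 ≤ L) (h₁ : L + 1 ≤ l₁) (h₂ : l₁ ≤ 2*L - 1) (h₄ : l₂ ≤ l₁ - L) :
    loglik2 L σ ym l₁ l₂ x
      = -(1/(2*σ^2)) * ∑ i ∈ range L, (ym i)^2
        + (1/(2*σ^2)) * ∑ i ∈ range L,
            (if L ≤ i + l₁ ∧ i + l₁ < 2*L then
              2 * ym i * coord L x (i + l₁ - L) - coord L x (i + l₁ - L)^2 else 0)
        + (1/(2*σ^2)) * ∑ i ∈ range L,
            (if L ≤ i + l₂ ∧ i + l₂ < 2*L then
              2 * ym i * coord L x (i + l₂ - L) - coord L x (i + l₂ - L)^2 else 0) := by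
  unfold loglik2
  have h : ∀ i ∈ range L,
      (ym i - Zpad L x ((i+l₁) % (2*L)) - Zpad L x ((i+l₂) % (2*L)))^2
      = (ym i)^2
        - (if L ≤ i + l₁ ∧ i + l₁ < 2*L then
            2 * ym i * coord L x (i + l₁ - L) - coord L x (i + l₁ - L)^2 else 0)
        - (if L ≤ i + l₂ ∧ i + l₂ < 2*L then
            2 * ym i * coord L x (i + l₂ - L) - coord L x (i + l₂ - L)^2 else 0) := by
    intro i hi
    have hi' := mem_range.mp hi
    rw [Zpad_mod L x i l₁ hi' (by omega), Zpad_mod L x i l₂ hi' (by omega)]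
    split_ifs with c1 c2 c2
    · omega
    · ring
    · ring
    · ring
  rw [Finset.sum_congr rfl h, Finset.sum_sub_distrib, Finset.sum_sub_distrib]
  ring

open Finset in
private lemma perM (L : ℕ) (hL : 1 ≤ L) (σ : ℝ) (ym : ℕ → ℝ) (wm : ℕ → ℝ)
    (vm : ℕ → ℕ → ℝ) (x : Fin L → ℝ) :
    (∑ l ∈ range (2*L), wm l * loglik1 L σ ym l x)
      + (∑ l₁ ∈ Icc (L+1) (2*L-1), ∑ l₂ ∈ Icc 1 (l₁-L), vm l₁ l₂ * loglik2 L σ ym l₁ l₂ x)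
    = ((∑ l ∈ range (2*L), wm l) + ∑ l₁ ∈ Icc (L+1) (2*L-1), ∑ l₂ ∈ Icc 1 (l₁-L), vm l₁ l₂)
        * (-(1/(2*σ^2)) * ∑ i ∈ range L, (ym i)^2)
      + (1/(2*σ^2)) * ∑ j ∈ range L,
          (2 * ((∑ l ∈ Icc (j+1) (j+L), wm l * ym (j+L-l))
                + (∑ l₁ ∈ Icc (L+1) (j+L), ∑ l₂ ∈ Icc 1 (l₁-L), vm l₁ l₂ * ym (j+L-l₁))
                + ∑ l₁ ∈ Icc (L+j+1) (2*L-1), ∑ l₂ ∈ Icc (j+1) (l₁-L), vm l₁ l₂ * ym (j+L-l₂))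
             * coord L x j
           - ((∑ l ∈ Icc (j+1) (j+L), wm l)
                + (∑ l₁ ∈ Icc (L+1) (j+L), ∑ l₂ ∈ Icc 1 (l₁-L), vm l₁ l₂)
                + ∑ l₁ ∈ Icc (L+j+1) (2*L-1), ∑ l₂ ∈ Icc (j+1) (l₁-L), vm l₁ l₂)
             * coord L x j ^ 2) := by
  have hW : ∑ l ∈ range (2*L), wm l * loglik1 L σ ym l x
      = (∑ l ∈ range (2*L), wm l) * (-(1/(2*σ^2)) * ∑ i ∈ range L, (ym i)^2)
        + (1/(2*σ^2)) * ∑ j ∈ range L, ∑ l ∈ Icc (j+1) (j+L),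
            wm l * (2 * ym (j+L-l) * coord L x j - coord L x j ^ 2) := by
    have e1 : ∀ l ∈ range (2*L), wm l * loglik1 L σ ym l x
        = wm l * (-(1/(2*σ^2)) * ∑ i ∈ range L, (ym i)^2)
          + (1/(2*σ^2)) * ∑ i ∈ range L,
              (if L ≤ i + l ∧ i + l < 2*L then
                wm l * (2 * ym i * coord L x (i + l - L) - coord L x (i + l - L)^2)
              else 0) := by
      intro l hl
      rw [loglik1_expand L σ ym l x (mem_range.mp hl), mul_add]
      congr 1
      rw [mul_left_comm, Finset.mul_sum]
      congr 1
      refine Finset.sum_congr rfl fun i _ => ?_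
      rw [mul_ite, mul_zero]
    rw [Finset.sum_congr rfl e1, Finset.sum_add_distrib, ← Finset.sum_mul, ← Finset.mul_sum]
    rw [sumA L (fun l i => wm l * (2 * ym i * coord L x (i + l - L) - coord L x (i + l - L)^2))]
    congr 1
    congr 1
    refine Finset.sum_congr rfl fun j hj => Finset.sum_congr rfl fun l hl => ?_
    have h1 : j + L - l + l - L = j := by
      simp only [mem_Icc] at hl
      omega
    rw [h1]
  have hV : (∑ l₁ ∈ Icc (L+1) (2*L-1), ∑ l₂ ∈ Icc 1 (l₁-L),
        vm l₁ l₂ * loglik2 L σ ym l₁ l₂ x)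
      = (∑ l₁ ∈ Icc (L+1) (2*L-1), ∑ l₂ ∈ Icc 1 (l₁-L), vm l₁ l₂)
          * (-(1/(2*σ^2)) * ∑ i ∈ range L, (ym i)^2)
        + (1/(2*σ^2)) * ∑ j ∈ range L, ∑ l₁ ∈ Icc (L+1) (j+L), ∑ l₂ ∈ Icc 1 (l₁-L),
            vm l₁ l₂ * (2 * ym (j+L-l₁) * coord L x j - coord L x j ^ 2)
        + (1/(2*σ^2)) * ∑ j ∈ range L, ∑ l₁ ∈ Icc (L+j+1) (2*L-1), ∑ l₂ ∈ Icc (j+1) (l₁-L),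
            vm l₁ l₂ * (2 * ym (j+L-l₂) * coord L x j - coord L x j ^ 2) := by
    have e2 : ∀ l₁ ∈ Icc (L+1) (2*L-1), ∀ l₂ ∈ Icc 1 (l₁-L),
        vm l₁ l₂ * loglik2 L σ ym l₁ l₂ x
        = vm l₁ l₂ * (-(1/(2*σ^2)) * ∑ i ∈ range L, (ym i)^2)
          + (1/(2*σ^2)) * ∑ i ∈ range L,
              (if L ≤ i + l₁ ∧ i + l₁ < 2*L then
                vm l₁ l₂ * (2 * ym i * coord L x (i + l₁ - L) - coord L x (i + l₁ - L)^2)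
              else 0)
          + (1/(2*σ^2)) * ∑ i ∈ range L,
              (if L ≤ i + l₂ ∧ i + l₂ < 2*L then
                vm l₁ l₂ * (2 * ym i * coord L x (i + l₂ - L) - coord L x (i + l₂ - L)^2)
              else 0) := by
      intro l₁ hl₁ l₂ hl₂
      simp only [mem_Icc] at hl₁ hl₂
      rw [loglik2_expand L σ ym l₁ l₂ x hL hl₁.1 hl₁.2 hl₂.2, mul_add, mul_add]
      congr 1
      · congr 1
        rw [mul_left_comm, Finset.mul_sum]
        congr 1
        refine Finset.sum_congr rfl fun i _ => ?_
        rw [mul_ite, mul_zero]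
      · rw [mul_left_comm, Finset.mul_sum]
        congr 1
        refine Finset.sum_congr rfl fun i _ => ?_
        rw [mul_ite, mul_zero]
    rw [Finset.sum_congr rfl (fun l₁ hl₁ =>
      Finset.sum_congr rfl (fun l₂ hl₂ => e2 l₁ hl₁ l₂ hl₂))]
    simp only [Finset.sum_add_distrib]
    congr 1
    congr 1
    · rw [Finset.sum_congr rfl (fun l₁ _ => (Finset.sum_mul _ _ _).symm), ← Finset.sum_mul]
    · -- the l₁-occurrence part
      rw [Finset.sum_congr rfl (fun l₁ _ => (Finset.mul_sum _ _ _).symm), ← Finset.mul_sum]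
      congr 1
      have swap : ∀ l₁ ∈ Icc (L+1) (2*L-1),
          ∑ l₂ ∈ Icc 1 (l₁-L), ∑ i ∈ range L,
            (if L ≤ i + l₁ ∧ i + l₁ < 2*L then
              vm l₁ l₂ * (2 * ym i * coord L x (i + l₁ - L) - coord L x (i + l₁ - L)^2)
            else 0)
          = ∑ i ∈ range L, (if L ≤ i + l₁ ∧ i + l₁ < 2*L then
              ∑ l₂ ∈ Icc 1 (l₁-L),
                vm l₁ l₂ * (2 * ym i * coord L x (i + l₁ - L) - coord L x (i + l₁ - L)^2)
            else 0) := by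
        intro l₁ _
        rw [Finset.sum_comm]
        refine Finset.sum_congr rfl fun i _ => ?_
        split_ifs
        · rfl
        · exact Finset.sum_const_zero
      rw [Finset.sum_congr rfl swap]
      rw [sumB' L (fun l₁ i => ∑ l₂ ∈ Icc 1 (l₁-L),
        vm l₁ l₂ * (2 * ym i * coord L x (i + l₁ - L) - coord L x (i + l₁ - L)^2))]
      refine Finset.sum_congr rfl fun j _ => Finset.sum_congr rfl fun l₁ hl₁ => ?_
      have h1 : j + L - l₁ + l₁ - L = j := by
        simp only [mem_Icc] at hl₁
        omega
      rw [h1]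
    · -- the l₂-occurrence part
      rw [Finset.sum_congr rfl (fun l₁ _ => (Finset.mul_sum _ _ _).symm), ← Finset.mul_sum]
      congr 1
      rw [sumC L (fun l₁ l₂ i =>
        vm l₁ l₂ * (2 * ym i * coord L x (i + l₂ - L) - coord L x (i + l₂ - L)^2))]
      refine Finset.sum_congr rfl fun j _ => Finset.sum_congr rfl fun l₁ hl₁ =>
        Finset.sum_congr rfl fun l₂ hl₂ => ?_
      have h1 : j + L - l₂ + l₂ - L = j := by
        simp only [mem_Icc] at hl₁ hl₂
        omega
      rw [h1]
  rw [hW, hV]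
  have hj : ∀ j ∈ range L,
      (2 * ((∑ l ∈ Icc (j+1) (j+L), wm l * ym (j+L-l))
            + (∑ l₁ ∈ Icc (L+1) (j+L), ∑ l₂ ∈ Icc 1 (l₁-L), vm l₁ l₂ * ym (j+L-l₁))
            + ∑ l₁ ∈ Icc (L+j+1) (2*L-1), ∑ l₂ ∈ Icc (j+1) (l₁-L), vm l₁ l₂ * ym (j+L-l₂))
         * coord L x j
       - ((∑ l ∈ Icc (j+1) (j+L), wm l)
            + (∑ l₁ ∈ Icc (L+1) (j+L), ∑ l₂ ∈ Icc 1 (l₁-L), vm l₁ l₂)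
            + ∑ l₁ ∈ Icc (L+j+1) (2*L-1), ∑ l₂ ∈ Icc (j+1) (l₁-L), vm l₁ l₂)
         * coord L x j ^ 2)
      = (∑ l ∈ Icc (j+1) (j+L), wm l * (2 * ym (j+L-l) * coord L x j - coord L x j ^ 2))
        + (∑ l₁ ∈ Icc (L+1) (j+L), ∑ l₂ ∈ Icc 1 (l₁-L),
            vm l₁ l₂ * (2 * ym (j+L-l₁) * coord L x j - coord L x j ^ 2))
        + ∑ l₁ ∈ Icc (L+j+1) (2*L-1), ∑ l₂ ∈ Icc (j+1) (l₁-L),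
            vm l₁ l₂ * (2 * ym (j+L-l₂) * coord L x j - coord L x j ^ 2) := by
    intro j _
    have eW : ∑ l ∈ Icc (j+1) (j+L), wm l * (2 * ym (j+L-l) * coord L x j - coord L x j ^ 2)
        = ∑ l ∈ Icc (j+1) (j+L),
            (2 * (wm l * ym (j+L-l)) * coord L x j - wm l * coord L x j ^ 2) :=
      Finset.sum_congr rfl fun l _ => by ring
    have eV1 : ∀ l₁, ∑ l₂ ∈ Icc 1 (l₁-L),
          vm l₁ l₂ * (2 * ym (j+L-l₁) * coord L x j - coord L x j ^ 2)
        = ∑ l₂ ∈ Icc 1 (l₁-L),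
            (2 * (vm l₁ l₂ * ym (j+L-l₁)) * coord L x j - vm l₁ l₂ * coord L x j ^ 2) :=
      fun l₁ => Finset.sum_congr rfl fun l₂ _ => by ring
    have eV2 : ∀ l₁, ∑ l₂ ∈ Icc (j+1) (l₁-L),
          vm l₁ l₂ * (2 * ym (j+L-l₂) * coord L x j - coord L x j ^ 2)
        = ∑ l₂ ∈ Icc (j+1) (l₁-L),
            (2 * (vm l₁ l₂ * ym (j+L-l₂)) * coord L x j - vm l₁ l₂ * coord L x j ^ 2) :=
      fun l₁ => Finset.sum_congr rfl fun l₂ _ => by ring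
    rw [eW, collect2]
    rw [Finset.sum_congr rfl fun l₁ _ => (eV1 l₁).trans (collect2 _ _ _ _), collect2]
    rw [Finset.sum_congr rfl fun l₁ _ => (eV2 l₁).trans (collect2 _ _ _ _), collect2]
    ring
  rw [Finset.sum_congr rfl hj]
  simp only [Finset.sum_add_distrib, mul_add]
  ring



open Finset in
private lemma emObjective_eq (L : ℕ) (hL : 1 ≤ L) (σ : ℝ) (Nd : ℕ) (y : ℕ → ℕ → ℝ)
    (w : ℕ → ℕ → ℝ) (v : ℕ → ℕ → ℕ → ℝ) (x : Fin L → ℝ) :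
    emObjective L σ Nd y w v x
      = (∑ m ∈ range Nd,
          ((∑ l ∈ range (2*L), w m l)
            + ∑ l₁ ∈ Icc (L+1) (2*L-1), ∑ l₂ ∈ Icc 1 (l₁-L), v m l₁ l₂)
          * (-(1/(2*σ^2)) * ∑ i ∈ range L, (y m i)^2))
        + (1/(2*σ^2)) * ∑ j ∈ range L,
            (2 * emNumer L Nd y w v j * coord L x j
              - emDenom L Nd w v j * coord L x j ^ 2) := by
  unfold emObjective
  rw [Finset.sum_congr rfl (fun m _ => perM L hL σ (y m) (w m) (v m) x)]
  rw [Finset.sum_add_distrib]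
  congr 1
  rw [← Finset.mul_sum, Finset.sum_comm]
  congr 1
  refine Finset.sum_congr rfl fun j _ => ?_
  unfold emNumer emDenom
  exact collect2 (range Nd) _ _ _

/-- Fix `L ≥ 1`, `σ > 0`, segments `y_0, …, y_{N_d−1} ∈ ℝ^L`, and nonnegative weights
`w_m[l]` and `v_m[l₁,l₂]`. If the denominators `D_j` are strictly positive for all
`0 ≤ j ≤ L−1`, then the M-step objective `F` of the approximate EM algorithm with up to two
signal occurrences per segment is concave with a unique global maximizer `x*` given
coordinatewise by `x*[j] = emNumer j / D_j`. -/
theorem emObjective2_unique_maximizer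
    (L : ℕ) (hL : 1 ≤ L) (σ : ℝ) (hσ : 0 < σ) (Nd : ℕ)
    (y : ℕ → ℕ → ℝ) (w : ℕ → ℕ → ℝ) (v : ℕ → ℕ → ℕ → ℝ)
    (hw : ∀ m l, 0 ≤ w m l) (hv : ∀ m l₁ l₂, 0 ≤ v m l₁ l₂)
    (hD : ∀ j : Fin L, 0 < emDenom L Nd w v j) :
    ConcaveOn ℝ Set.univ (emObjective L σ Nd y w v) ∧
    (∀ x : Fin L → ℝ, emObjective L σ Nd y w v x ≤ emObjective L σ Nd y w v
      (fun j : Fin L => emNumer L Nd y w v j / emDenom L Nd w v j)) ∧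
    (∀ x : Fin L → ℝ,
      (∀ z : Fin L → ℝ, emObjective L σ Nd y w v z ≤ emObjective L σ Nd y w v x) →
      x = fun j : Fin L => emNumer L Nd y w v j / emDenom L Nd w v j) := by
  have hc : (0:ℝ) < 1/(2*σ^2) := by positivity
  set N : ℕ → ℝ := emNumer L Nd y w v with hN
  set D : ℕ → ℝ := emDenom L Nd w v with hD'
  have hDpos : ∀ j ∈ Finset.range L, 0 < D j := by
    intro j hj
    have := hD ⟨j, Finset.mem_range.mp hj⟩
    simpa using this
  set xstar : Fin L → ℝ := fun j : Fin L => N j / D j with hxs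
  have hcoordstar : ∀ j ∈ Finset.range L, coord L xstar j = N j / D j := by
    intro j hj
    have hjL := Finset.mem_range.mp hj
    simp [coord, hjL, hxs]
  obtain ⟨C, hE⟩ : ∃ C : ℝ, ∀ x : Fin L → ℝ, emObjective L σ Nd y w v x
      = C + 1/(2*σ^2) * ∑ j ∈ Finset.range L,
          (2 * N j * coord L x j - D j * coord L x j ^ 2) :=
    ⟨_, fun x => emObjective_eq L hL σ Nd y w v x⟩
  -- per-coordinate maximization
  have hterm : ∀ j ∈ Finset.range L, ∀ t : ℝ,
      2 * N j * t - D j * t^2 ≤ 2 * N j * (N j / D j) - D j * (N j / D j)^2 := by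
    intro j hj t
    have hd := hDpos j hj
    have heq : 2 * N j * (N j / D j) - D j * (N j / D j)^2 = (N j)^2 / D j := by
      field_simp
      ring
    rw [heq, le_div_iff₀ hd]
    nlinarith [sq_nonneg (N j - D j * t)]
  have hmax : ∀ x : Fin L → ℝ, emObjective L σ Nd y w v x ≤ emObjective L σ Nd y w v xstar := by
    intro x
    rw [hE x, hE xstar]
    refine add_le_add_right (mul_le_mul_of_nonneg_left (Finset.sum_le_sum fun j hj => ?_) hc.le) _
    rw [hcoordstar j hj]
    exact hterm j hj (coord L x j)
  refine ⟨?_, hmax, ?_⟩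
  · -- concavity
    refine ⟨convex_univ, ?_⟩
    intro p _ q _ a b ha hb hab
    simp only [smul_eq_mul]
    rw [hE p, hE q, hE (a • p + b • q)]
    have hcoord : ∀ j, coord L (a • p + b • q) j = a * coord L p j + b * coord L q j := by
      intro j
      unfold coord
      split_ifs
      · simp [mul_comm]
      · ring
    have hsum : a * ∑ j ∈ Finset.range L,
          (2 * N j * coord L p j - D j * coord L p j ^ 2)
        + b * ∑ j ∈ Finset.range L,
          (2 * N j * coord L q j - D j * coord L q j ^ 2)
        ≤ ∑ j ∈ Finset.range L,
          (2 * N j * coord L (a • p + b • q) j - D j * coord L (a • p + b • q) j ^ 2) := by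
      rw [Finset.mul_sum, Finset.mul_sum, ← Finset.sum_add_distrib]
      refine Finset.sum_le_sum fun j hj => ?_
      rw [hcoord j]
      have hd := (hDpos j hj).le
      have hkey : 2 * N j * (a * coord L p j + b * coord L q j)
            - D j * (a * coord L p j + b * coord L q j) ^ 2
          - (a * (2 * N j * coord L p j - D j * coord L p j ^ 2)
            + b * (2 * N j * coord L q j - D j * coord L q j ^ 2))
          = D j * (a * b * (coord L p j - coord L q j)^2) := by
        have hb' : b = 1 - a := by linarith
        rw [hb']
        ring
      have hnn : 0 ≤ D j * (a * b * (coord L p j - coord L q j)^2) :=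
        mul_nonneg hd (mul_nonneg (mul_nonneg ha hb) (sq_nonneg _))
      linarith [hkey, hnn]
    have e : a * (C + 1/(2*σ^2) * ∑ j ∈ Finset.range L,
          (2 * N j * coord L p j - D j * coord L p j ^ 2))
        + b * (C + 1/(2*σ^2) * ∑ j ∈ Finset.range L,
          (2 * N j * coord L q j - D j * coord L q j ^ 2))
        = C + 1/(2*σ^2) * (a * ∑ j ∈ Finset.range L,
            (2 * N j * coord L p j - D j * coord L p j ^ 2)
          + b * ∑ j ∈ Finset.range L,
            (2 * N j * coord L q j - D j * coord L q j ^ 2)) := by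
      linear_combination C * hab
    rw [e]
    exact add_le_add_right (mul_le_mul_of_nonneg_left hsum hc.le) C
  · -- uniqueness
    intro x hx
    have h1 : emObjective L σ Nd y w v x = emObjective L σ Nd y w v xstar :=
      le_antisymm (hmax x) (hx xstar)
    rw [hE x, hE xstar] at h1
    have h2 : ∑ j ∈ Finset.range L, (2 * N j * coord L x j - D j * coord L x j ^ 2)
        = ∑ j ∈ Finset.range L, (2 * N j * coord L xstar j - D j * coord L xstar j ^ 2) :=
      mul_left_cancel₀ hc.ne' (by linarith)
    have hle : ∀ j ∈ Finset.range L,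
        2 * N j * coord L x j - D j * coord L x j ^ 2
          ≤ 2 * N j * coord L xstar j - D j * coord L xstar j ^ 2 := by
      intro j hj
      rw [hcoordstar j hj]
      exact hterm j hj (coord L x j)
    have heach := (Finset.sum_eq_sum_iff_of_le hle).mp h2
    funext j
    have hj : (j : ℕ) ∈ Finset.range L := Finset.mem_range.mpr j.isLt
    have hjeq := heach (j : ℕ) hj
    rw [hcoordstar _ hj] at hjeq
    have hd := hDpos _ hj
    have hxj : coord L x (j : ℕ) = x j := by
      simp [coord, j.isLt]
    have heq2 : 2 * N ↑j * (N ↑j / D ↑j) - D ↑j * (N ↑j / D ↑j)^2 = (N ↑j)^2 / D ↑j := by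
      field_simp
      ring
    rw [heq2, eq_comm, div_eq_iff hd.ne'] at hjeq
    have hzero : (N ↑j - D ↑j * coord L x ↑j)^2 = 0 := by linear_combination hjeq
    have hlin : N ↑j - D ↑j * coord L x ↑j = 0 :=
      pow_eq_zero_iff (n := 2) (by norm_num) |>.mp hzero
    rw [hxj] at hlin
    show x j = N ↑j / D ↑j
    rw [eq_div_iff hd.ne']
    linarith
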